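/- Let R be an associative algebra over a field of characteristic 0 satisfying [x1,x2,x3][x4,x5,x6]=0. For any u_0,…,u_{n+1}, v_1,v_2,v_3, w_1,…,w_{2n} ∈ R and any permutation σ of {1,…,2n}, one has u_0[v_1,v_2,v_3]u_1[w_{σ(1)},w_{σ(2)}]u_2⋯u_n[w_{σ(2n−1)},w_{σ(2n)}]u_{n+1} = sgn(σ)·u_0[v_1,v_2,v_3][w_1,w_2]⋯[w_{2n−1},w_{2n}]·u_1⋯u_{n+1}. -/

import Mathlib

/-- Commutator `[a,b] = ab - ba`. -/
def br {R : Type*} [Ring R] (a b : R) : R := a * b - b * a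

/-- Left-normed triple commutator `[a,b,c] = [[a,b],c]`. -/
def tr {R : Type*} [Ring R] (a b c : R) : R := br (br a b) c

namespace Stmt14

variable {R : Type*} [Ring R]

theorem two_mul_lt' {n : ℕ} (i : Fin n) : 2 * (i : ℕ) < 2 * n := by omega

theorem two_mul_add_lt' {n : ℕ} (i : Fin n) : 2 * (i : ℕ) + 1 < 2 * n := by omega

/-- `c` commutes with everything to the right of `m`. -/
def IsComm (m c : R) : Prop := ∀ x y : R, m * x * (c * y) = m * x * (y * c)

/-- All commutators commute with everything to the right of `m`. -/
def GoodM (m : R) : Prop := ∀ a b : R, IsComm m (br a b)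

theorem goodM_tr (hPI : ∀ a₁ a₂ a₃ a₄ a₅ a₆ : R, tr a₁ a₂ a₃ * tr a₄ a₅ a₆ = 0)
    (v₁ v₂ v₃ : R) : GoodM (tr v₁ v₂ v₃) := by
  intro a b x y
  have h1 : tr v₁ v₂ v₃ * tr a b (x * y) = 0 := hPI _ _ _ _ _ _
  have h2 : tr v₁ v₂ v₃ * tr a b x = 0 := hPI _ _ _ _ _ _
  simp only [tr, br] at h1 h2 ⊢
  linear_combination (norm := noncomm_ring) h1 - h2 * y

theorem GoodM.mul_right {m : R} (hm : GoodM m) (z : R) : GoodM (m * z) := by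
  intro a b x y
  linear_combination (norm := noncomm_ring) hm a b (z * x) y

theorem GoodM.mul_left {m : R} (hm : GoodM m) (z : R) : GoodM (z * m) := by
  intro a b x y
  linear_combination (norm := noncomm_ring) z * hm a b x y

theorem IsComm.one {m : R} : IsComm m (1 : R) := by
  intro x y; rw [one_mul, mul_one]

theorem IsComm.mul {m c d : R} (h1 : IsComm m c) (h2 : IsComm m d) : IsComm m (c * d) := by
  intro x y
  linear_combination (norm := noncomm_ring) h1 x (d * y) + h2 x (y * c)

theorem IsComm.neg {m c : R} (h : IsComm m c) : IsComm m (-c) := by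
  intro x y
  linear_combination (norm := noncomm_ring) -(h x y)

theorem comm_prod {m : R} {l : List R} (hl : ∀ c ∈ l, IsComm m c) : IsComm m l.prod := by
  induction l with
  | nil => exact IsComm.one
  | cons a t ih =>
      rw [List.prod_cons]
      exact (hl a (by simp)).mul (ih fun c hc => hl c (List.mem_cons_of_mem a hc))

theorem prod_perm {m : R} {l l' : List R} (h : l.Perm l') :
    (∀ c ∈ l, IsComm m c) → ∀ x : R, m * x * l.prod = m * x * l'.prod := by
  induction h with
  | nil => intro _ _; rfl
  | cons a h ih =>
      intro hl x
      simp only [List.prod_cons]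
      have := ih (fun c hc => hl c (List.mem_cons_of_mem a hc)) (x * a)
      linear_combination (norm := noncomm_ring) this
  | swap c d l =>
      intro hl x
      simp only [List.prod_cons]
      have hd : IsComm m d := hl d (by simp)
      linear_combination (norm := noncomm_ring) hd x c * l.prod
  | trans h₁ h₂ ih₁ ih₂ =>
      intro hl x
      exact (ih₁ hl x).trans (ih₂ (fun c hc => hl c (h₁.mem_iff.mpr hc)) x)

theorem cross {m : R} (hm : GoodM m) (a b c d : R) :
    m * (br a b * br c d) = -(m * (br a c * br b d)) := by
  have h0 := hm a (b * c) 1 d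
  have h1 := hm a b 1 (c * d)
  have h2 := hm a c b d
  have h3 := hm a b d c
  have h4 := hm c d 1 (br a b)
  have h5 := hm b d 1 (br a c)
  simp only [br] at h0 h1 h2 h3 h4 h5 ⊢
  linear_combination (norm := noncomm_ring) h0 - h1 - h2 + h3 - h4 - h5

theorem crossBC {m : R} (hm : GoodM m) (a b c d : R) :
    m * (br a c * br b d) = -(m * (br a b * br c d)) := by
  linear_combination (norm := noncomm_ring) cross hm a b c d

theorem crossAC {m : R} (hm : GoodM m) (a b c d : R) :
    m * (br c b * br a d) = -(m * (br a b * br c d)) := by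
  have s1 := hm b c 1 (br a d)
  have c1 := cross hm a d b c
  simp only [br] at s1 c1 ⊢
  linear_combination (norm := noncomm_ring) -s1 - c1

theorem crossAD {m : R} (hm : GoodM m) (a b c d : R) :
    m * (br d b * br c a) = -(m * (br a b * br c d)) := by
  have s2 := hm b d 1 (br a c)
  have c1 := cross hm a b c d
  simp only [br] at s2 c1 ⊢
  linear_combination (norm := noncomm_ring) s2 + c1

theorem crossBD {m : R} (hm : GoodM m) (a b c d : R) :
    m * (br a d * br c b) = -(m * (br a b * br c d)) := by
  have c1 := cross hm a d b c
  simp only [br] at c1 ⊢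
  linear_combination (norm := noncomm_ring) -c1


theorem erase2_perm {N : ℕ} (p q : Fin N) (hpq : q ≠ p) :
    (List.finRange N).Perm (p :: q :: (((List.finRange N).erase p).erase q)) := by
  refine (List.perm_cons_erase (List.mem_finRange p)).trans (List.Perm.cons p ?_)
  exact List.perm_cons_erase (by rw [List.mem_erase_of_ne hpq]; exact List.mem_finRange q)

theorem erase2_mem {N : ℕ} {p q k : Fin N}
    (hk : k ∈ ((List.finRange N).erase p).erase q) : k ≠ p ∧ k ≠ q := by
  have h1 := ((List.nodup_finRange N).erase p).mem_erase_iff.mp hk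
  have h2 := (List.nodup_finRange N).mem_erase_iff.mp h1.2
  exact ⟨h2.1, h1.1⟩

theorem twoSlot {m : R} (hm : GoodM m) {N : ℕ} (f g : Fin N → R) (p q : Fin N) (hpq : q ≠ p)
    (hbf : ∀ k, ∃ a b, f k = br a b) (hbg : ∀ k, ∃ a b, g k = br a b)
    (hfg : ∀ k, k ≠ p → k ≠ q → f k = g k)
    (hkey : m * (f p * f q) = -(m * (g p * g q))) :
    m * (List.ofFn f).prod = -(m * (List.ofFn g).prod) := by
  set D := ((List.finRange N).erase p).erase q with hD
  have hcf : ∀ c ∈ (List.finRange N).map f, IsComm m c := by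
    intro c hc
    obtain ⟨i, _, hi⟩ := List.mem_map.mp hc
    obtain ⟨a, b, e⟩ := hbf i
    rw [← hi, e]; exact hm a b
  have hcg : ∀ c ∈ (List.finRange N).map g, IsComm m c := by
    intro c hc
    obtain ⟨i, _, hi⟩ := List.mem_map.mp hc
    obtain ⟨a, b, e⟩ := hbg i
    rw [← hi, e]; exact hm a b
  have e1 : m * (List.ofFn f).prod = m * ((f p :: f q :: D.map f).prod) := by
    have := prod_perm ((erase2_perm p q hpq).map f) hcf 1
    simpa [List.ofFn_eq_map] using this
  have e2 : m * (List.ofFn g).prod = m * ((g p :: g q :: D.map g).prod) := by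
    have := prod_perm ((erase2_perm p q hpq).map g) hcg 1
    simpa [List.ofFn_eq_map] using this
  have eD : D.map f = D.map g :=
    List.map_congr_left fun k hk => hfg k (erase2_mem hk).1 (erase2_mem hk).2
  rw [e1, e2, ← eD]
  simp only [List.prod_cons]
  linear_combination (norm := noncomm_ring) hkey * (D.map f).prod

theorem oneSlot {m : R} (hm : GoodM m) {N : ℕ} (f g : Fin N → R) (p : Fin N)
    (hbf : ∀ k, ∃ a b, f k = br a b) (hbg : ∀ k, ∃ a b, g k = br a b)
    (hfg : ∀ k, k ≠ p → f k = g k) (hp : f p = -(g p)) :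
    m * (List.ofFn f).prod = -(m * (List.ofFn g).prod) := by
  set D := (List.finRange N).erase p with hD
  have hcf : ∀ c ∈ (List.finRange N).map f, IsComm m c := by
    intro c hc
    obtain ⟨i, _, hi⟩ := List.mem_map.mp hc
    obtain ⟨a, b, e⟩ := hbf i
    rw [← hi, e]; exact hm a b
  have hcg : ∀ c ∈ (List.finRange N).map g, IsComm m c := by
    intro c hc
    obtain ⟨i, _, hi⟩ := List.mem_map.mp hc
    obtain ⟨a, b, e⟩ := hbg i
    rw [← hi, e]; exact hm a b
  have hperm : (List.finRange N).Perm (p :: D) :=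
    List.perm_cons_erase (List.mem_finRange p)
  have e1 : m * (List.ofFn f).prod = m * ((f p :: D.map f).prod) := by
    have := prod_perm (hperm.map f) hcf 1
    simpa [List.ofFn_eq_map] using this
  have e2 : m * (List.ofFn g).prod = m * ((g p :: D.map g).prod) := by
    have := prod_perm (hperm.map g) hcg 1
    simpa [List.ofFn_eq_map] using this
  have eD : D.map f = D.map g :=
    List.map_congr_left fun k hk =>
      hfg k ((List.nodup_finRange N).mem_erase_iff.mp hk).1
  rw [e1, e2, ← eD]
  simp only [List.prod_cons, hp]
  noncomm_ring


theorem key_aux {m : R} (hm : GoodM m) {n : ℕ} (w : Fin (2 * n) → R) (x y : Fin (2 * n))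
    (hxy : x < y) :
    m * (List.ofFn (fun i : Fin n =>
        br (w (Equiv.swap x y ⟨2 * i, two_mul_lt' i⟩)) (w (Equiv.swap x y ⟨2 * i + 1, two_mul_add_lt' i⟩)))).prod
    = -(m * (List.ofFn (fun i : Fin n =>
        br (w ⟨2 * i, two_mul_lt' i⟩) (w ⟨2 * i + 1, two_mul_add_lt' i⟩))).prod) := by
  have hv : (x : ℕ) < (y : ℕ) := hxy
  have hx2 : (x : ℕ) < 2 * n := x.isLt
  have hy2 : (y : ℕ) < 2 * n := y.isLt
  have hpn : (x : ℕ) / 2 < n := by omega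
  have hqn : (y : ℕ) / 2 < n := by omega
  set p : Fin n := ⟨(x : ℕ) / 2, hpn⟩ with hp
  set q : Fin n := ⟨(y : ℕ) / 2, hqn⟩ with hq
  by_cases hpq : (x : ℕ) / 2 = (y : ℕ) / 2
  · -- same pair: y = x + 1, x even
    have hpar : (x : ℕ) % 2 = 0 ∧ (y : ℕ) = (x : ℕ) + 1 := by omega
    apply oneSlot hm _ _ p (fun k => ⟨_, _, rfl⟩) (fun k => ⟨_, _, rfl⟩)
    · intro k hk
      have hkv : (k : ℕ) ≠ (x : ℕ) / 2 := fun h => hk (Fin.ext h)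
      have h1 : (⟨2 * (k : ℕ), two_mul_lt' k⟩ : Fin (2 * n)) ≠ x := fun h =>
        hkv (by have := congrArg Fin.val h; simp at this; omega)
      have h2 : (⟨2 * (k : ℕ), two_mul_lt' k⟩ : Fin (2 * n)) ≠ y := fun h =>
        hkv (by have := congrArg Fin.val h; simp at this; omega)
      have h3 : (⟨2 * (k : ℕ) + 1, two_mul_add_lt' k⟩ : Fin (2 * n)) ≠ x := fun h =>
        hkv (by have := congrArg Fin.val h; simp at this; omega)
      have h4 : (⟨2 * (k : ℕ) + 1, two_mul_add_lt' k⟩ : Fin (2 * n)) ≠ y := fun h =>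
        hkv (by have := congrArg Fin.val h; simp at this; omega)
      rw [Equiv.swap_apply_of_ne_of_ne h1 h2, Equiv.swap_apply_of_ne_of_ne h3 h4]
    · have ex : (⟨2 * ((⟨(x:ℕ)/2, hpn⟩ : Fin n) : ℕ), by omega⟩ : Fin (2 * n)) = x := by
        apply Fin.ext; simp; omega
      have ey : (⟨2 * ((⟨(x:ℕ)/2, hpn⟩ : Fin n) : ℕ) + 1, by omega⟩ : Fin (2 * n)) = y := by
        apply Fin.ext; simp; omega
      rw [hp, ex, ey, Equiv.swap_apply_left, Equiv.swap_apply_right]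
      simp only [br]
      noncomm_ring
  · -- different pairs
    have hqp : q ≠ p := fun h => hpq (by have := congrArg Fin.val h; simpa using this.symm)
    apply twoSlot hm _ _ p q hqp (fun k => ⟨_, _, rfl⟩) (fun k => ⟨_, _, rfl⟩)
    · intro k hkp hkq
      have hkv : (k : ℕ) ≠ (x : ℕ) / 2 := fun h => hkp (Fin.ext h)
      have hkv' : (k : ℕ) ≠ (y : ℕ) / 2 := fun h => hkq (Fin.ext h)
      have h1 : (⟨2 * (k : ℕ), two_mul_lt' k⟩ : Fin (2 * n)) ≠ x := fun h =>
        hkv (by have := congrArg Fin.val h; simp at this; omega)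
      have h2 : (⟨2 * (k : ℕ), two_mul_lt' k⟩ : Fin (2 * n)) ≠ y := fun h =>
        hkv' (by have := congrArg Fin.val h; simp at this; omega)
      have h3 : (⟨2 * (k : ℕ) + 1, two_mul_add_lt' k⟩ : Fin (2 * n)) ≠ x := fun h =>
        hkv (by have := congrArg Fin.val h; simp at this; omega)
      have h4 : (⟨2 * (k : ℕ) + 1, two_mul_add_lt' k⟩ : Fin (2 * n)) ≠ y := fun h =>
        hkv' (by have := congrArg Fin.val h; simp at this; omega)
      rw [Equiv.swap_apply_of_ne_of_ne h1 h2, Equiv.swap_apply_of_ne_of_ne h3 h4]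
    · -- the key 2x2 parity case analysis
      have hneux : ∀ (h : 2 * (p : ℕ) + 1 < 2 * n), (x:ℕ) % 2 = 0 →
          Equiv.swap x y ⟨2 * (p : ℕ) + 1, h⟩ = ⟨2 * (p : ℕ) + 1, h⟩ := by
        intro h hx0
        refine Equiv.swap_apply_of_ne_of_ne ?_ ?_ <;>
          · intro he
            have := congrArg Fin.val he
            simp [hp] at this
            omega
      have hneuy : ∀ (h : 2 * (q : ℕ) + 1 < 2 * n), (y:ℕ) % 2 = 0 →
          Equiv.swap x y ⟨2 * (q : ℕ) + 1, h⟩ = ⟨2 * (q : ℕ) + 1, h⟩ := by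
        intro h hy0
        refine Equiv.swap_apply_of_ne_of_ne ?_ ?_ <;>
          · intro he
            have := congrArg Fin.val he
            simp [hq] at this
            omega
      have hnevx : ∀ (h : 2 * (p : ℕ) < 2 * n), (x:ℕ) % 2 = 1 →
          Equiv.swap x y ⟨2 * (p : ℕ), h⟩ = ⟨2 * (p : ℕ), h⟩ := by
        intro h hx1
        refine Equiv.swap_apply_of_ne_of_ne ?_ ?_ <;>
          · intro he
            have := congrArg Fin.val he
            simp [hp] at this
            omega
      have hnevy : ∀ (h : 2 * (q : ℕ) < 2 * n), (y:ℕ) % 2 = 1 →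
          Equiv.swap x y ⟨2 * (q : ℕ), h⟩ = ⟨2 * (q : ℕ), h⟩ := by
        intro h hy1
        refine Equiv.swap_apply_of_ne_of_ne ?_ ?_ <;>
          · intro he
            have := congrArg Fin.val he
            simp [hq] at this
            omega
      have hmkx0 : (x:ℕ) % 2 = 0 → ∀ (h : 2 * (p : ℕ) < 2 * n),
          (⟨2 * (p : ℕ), h⟩ : Fin (2 * n)) = x := by
        intro hx0 h; apply Fin.ext; simp [hp]; omega
      have hmkx1 : (x:ℕ) % 2 = 1 → ∀ (h : 2 * (p : ℕ) + 1 < 2 * n),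
          (⟨2 * (p : ℕ) + 1, h⟩ : Fin (2 * n)) = x := by
        intro hx1 h; apply Fin.ext; simp [hp]; omega
      have hmky0 : (y:ℕ) % 2 = 0 → ∀ (h : 2 * (q : ℕ) < 2 * n),
          (⟨2 * (q : ℕ), h⟩ : Fin (2 * n)) = y := by
        intro hy0 h; apply Fin.ext; simp [hq]; omega
      have hmky1 : (y:ℕ) % 2 = 1 → ∀ (h : 2 * (q : ℕ) + 1 < 2 * n),
          (⟨2 * (q : ℕ) + 1, h⟩ : Fin (2 * n)) = y := by
        intro hy1 h; apply Fin.ext; simp [hq]; omega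
      rcases Nat.mod_two_eq_zero_or_one (x : ℕ) with hx0 | hx1 <;>
        rcases Nat.mod_two_eq_zero_or_one (y : ℕ) with hy0 | hy1
      · rw [hmkx0 hx0, hmky0 hy0, Equiv.swap_apply_left, Equiv.swap_apply_right,
          hneux _ hx0, hneuy _ hy0]
        exact crossAC hm (w x) (w ⟨2 * (p : ℕ) + 1, by omega⟩) (w y)
          (w ⟨2 * (q : ℕ) + 1, by omega⟩)
      · rw [hmkx0 hx0, hmky1 hy1, Equiv.swap_apply_left, Equiv.swap_apply_right,
          hneux _ hx0, hnevy _ hy1]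
        exact crossAD hm (w x) (w ⟨2 * (p : ℕ) + 1, by omega⟩)
          (w ⟨2 * (q : ℕ), by omega⟩) (w y)
      · rw [hmkx1 hx1, hmky0 hy0, Equiv.swap_apply_left, Equiv.swap_apply_right,
          hnevx _ hx1, hneuy _ hy0]
        exact crossBC hm (w ⟨2 * (p : ℕ), by omega⟩) (w x) (w y)
          (w ⟨2 * (q : ℕ) + 1, by omega⟩)
      · rw [hmkx1 hx1, hmky1 hy1, Equiv.swap_apply_left, Equiv.swap_apply_right,
          hnevx _ hx1, hnevy _ hy1]
        exact crossBD hm (w ⟨2 * (p : ℕ), by omega⟩) (w x)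
          (w ⟨2 * (q : ℕ), by omega⟩) (w y)


theorem key {m : R} (hm : GoodM m) {n : ℕ} (w : Fin (2 * n) → R) (x y : Fin (2 * n))
    (hxy : x ≠ y) :
    m * (List.ofFn (fun i : Fin n =>
        br (w (Equiv.swap x y ⟨2 * i, two_mul_lt' i⟩)) (w (Equiv.swap x y ⟨2 * i + 1, two_mul_add_lt' i⟩)))).prod
    = -(m * (List.ofFn (fun i : Fin n =>
        br (w ⟨2 * i, two_mul_lt' i⟩) (w ⟨2 * i + 1, two_mul_add_lt' i⟩))).prod) := by
  rcases lt_or_gt_of_ne hxy with h | h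
  · exact key_aux hm w x y h
  · have := key_aux hm w y x h
    rwa [Equiv.swap_comm] at this

theorem core {m : R} (hm : GoodM m) {n : ℕ} (σ : Equiv.Perm (Fin (2 * n))) :
    ∀ w : Fin (2 * n) → R,
    m * (List.ofFn (fun i : Fin n =>
        br (w (σ ⟨2 * i, two_mul_lt' i⟩)) (w (σ ⟨2 * i + 1, two_mul_add_lt' i⟩)))).prod
    = (Equiv.Perm.sign σ : ℤ) • (m * (List.ofFn (fun i : Fin n =>
        br (w ⟨2 * i, two_mul_lt' i⟩) (w ⟨2 * i + 1, two_mul_add_lt' i⟩))).prod) := by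
  refine Equiv.Perm.swap_induction_on σ ?_ ?_
  · intro w; simp
  · intro π a b hab ih w
    have e : (fun i : Fin n =>
        br (w ((Equiv.swap a b * π) ⟨2 * i, two_mul_lt' i⟩))
          (w ((Equiv.swap a b * π) ⟨2 * i + 1, two_mul_add_lt' i⟩)))
        = (fun i : Fin n =>
        br ((fun t => w (Equiv.swap a b t)) (π ⟨2 * i, two_mul_lt' i⟩))
          ((fun t => w (Equiv.swap a b t)) (π ⟨2 * i + 1, two_mul_add_lt' i⟩))) := by
      funext i; rfl
    rw [e, ih (fun t => w (Equiv.swap a b t)), key hm w a b hab]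
    rw [Equiv.Perm.sign_mul, Equiv.Perm.sign_swap hab]
    simp [neg_smul]


theorem pull {m : R} (hm : GoodM m) (L : List (R × R)) (hL : ∀ c ∈ L, IsComm m c.2) :
    ∀ x : R, m * x * (L.map fun c => c.1 * c.2).prod
      = m * x * ((L.map Prod.snd).prod * (L.map Prod.fst).prod) := by
  induction L with
  | nil => intro x; simp
  | cons hd tl ih =>
      intro x
      simp only [List.map_cons, List.prod_cons]
      have ihx := ih (fun c hc => hL c (List.mem_cons_of_mem hd hc)) (x * (hd.1 * hd.2))
      have hc : IsComm m (hd.2 * (tl.map Prod.snd).prod) :=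
        (hL hd (by simp)).mul (comm_prod (by
          intro c hcm
          obtain ⟨pr, hpr, he⟩ := List.mem_map.mp hcm
          rw [← he]
          exact hL pr (List.mem_cons_of_mem hd hpr)))
      linear_combination (norm := noncomm_ring) ihx - hc x hd.1 * (tl.map Prod.fst).prod

end Stmt14

open Stmt14 in
/-- In an associative algebra over a field of characteristic zero satisfying
`[x1,x2,x3][x4,x5,x6] = 0`, for `n ≥ 1`, any `u₀,…,u_{n+1}`, `v₁,v₂,v₃`, `w₁,…,w_{2n}` and
any permutation `σ` of `{1,…,2n}`:
`u₀[v₁,v₂,v₃]u₁[w_{σ(1)},w_{σ(2)}]u₂⋯u_n[w_{σ(2n-1)},w_{σ(2n)}]u_{n+1}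
  = sgn(σ)·u₀[v₁,v₂,v₃][w₁,w₂]⋯[w_{2n-1},w_{2n}]u₁⋯u_{n+1}`. -/
theorem stmt14 {K R : Type*} [Field K] [CharZero K] [Ring R] [Algebra K R]
    (hPI : ∀ a₁ a₂ a₃ a₄ a₅ a₆ : R, tr a₁ a₂ a₃ * tr a₄ a₅ a₆ = 0)
    (n : ℕ) (hn : 1 ≤ n) (u : ℕ → R) (v₁ v₂ v₃ : R)
    (w : Fin (2 * n) → R) (σ : Equiv.Perm (Fin (2 * n))) :
    u 0 * tr v₁ v₂ v₃ *
        (List.ofFn (fun i : Fin n =>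
          u (i + 1) *
            br (w (σ ⟨2 * i, by omega⟩)) (w (σ ⟨2 * i + 1, by omega⟩)))).prod *
      u (n + 1)
    = (Equiv.Perm.sign σ : ℤ) •
        (u 0 * tr v₁ v₂ v₃ *
          (List.ofFn (fun i : Fin n =>
            br (w ⟨2 * i, by omega⟩) (w ⟨2 * i + 1, by omega⟩))).prod *
          (List.ofFn (fun i : Fin (n + 1) => u (i + 1))).prod) := by
  have hG : GoodM (u 0 * tr v₁ v₂ v₃) := (goodM_tr hPI v₁ v₂ v₃).mul_left (u 0)
  have hU : (List.ofFn (fun i : Fin (n + 1) => u (i + 1))).prod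
      = (List.ofFn (fun i : Fin n => u (i + 1))).prod * u (n + 1) := by
    rw [List.ofFn_succ', List.prod_concat, Fin.val_last]
    simp only [Fin.coe_castSucc]
  have hmem : ∀ c ∈ List.ofFn (fun i : Fin n =>
      ((u (i + 1) : R), br (w (σ ⟨2 * i, by omega⟩)) (w (σ ⟨2 * i + 1, by omega⟩)))),
      IsComm (u 0 * tr v₁ v₂ v₃) c.2 := by
    intro c hc
    obtain ⟨i, hi⟩ := List.mem_ofFn.mp hc
    rw [← hi]
    exact hG _ _
  have e1 : u 0 * tr v₁ v₂ v₃ *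
      (List.ofFn (fun i : Fin n =>
        u (i + 1) * br (w (σ ⟨2 * i, by omega⟩)) (w (σ ⟨2 * i + 1, by omega⟩)))).prod
      = u 0 * tr v₁ v₂ v₃ *
        ((List.ofFn (fun i : Fin n =>
          br (w (σ ⟨2 * i, by omega⟩)) (w (σ ⟨2 * i + 1, by omega⟩)))).prod *
         (List.ofFn (fun i : Fin n => u (i + 1))).prod) := by
    have hP := pull hG _ hmem 1
    simpa [List.map_ofFn, Function.comp_def] using hP
  have e2 := core hG σ w
  rw [e1, ← mul_assoc, e2, hU]
  rw [smul_mul_assoc, smul_mul_assoc, mul_assoc]
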